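/- Formally étale morphisms of cdga's satisfy two-out-of-three on the right: if f : A → B and g : B → C are morphisms of cdga's such that f and g ∘ f are formally étale, then g is formally étale. -/

import Mathlib

/-!
Cohomological skeleton of a (non-positively graded) commutative differential graded
ℂ-algebra (cdga): we record the commutative ℂ-algebra `H0 = H^0(A)` together with the
`H0`-modules `H n = H^n(A)` (only the indices `n < 0` are relevant for non-positively
graded cdga's).
-/
structure CDGACoh : Type 1 where
  H0 : Type
  commRing : CommRing H0
  alg : Algebra ℂ H0
  H : ℤ → Type
  acg : ∀ n, AddCommGroup (H n)
  mod : ∀ n, Module H0 (H n)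

attribute [instance] CDGACoh.commRing CDGACoh.alg CDGACoh.acg CDGACoh.mod

/-- A morphism of cdga's, seen at the level of cohomology: a ℂ-algebra map on `H^0`
and additive maps on each `H^n`, semilinear over the `H^0`-map. -/
structure CDGAHom (A B : CDGACoh) : Type where
  h0 : A.H0 →ₐ[ℂ] B.H0
  hn : ∀ n : ℤ, A.H n →+ B.H n
  semilinear : ∀ (n : ℤ) (r : A.H0) (x : A.H n), hn n (r • x) = h0 r • hn n x

namespace CDGAHom

/-- The identity morphism. -/
def id (A : CDGACoh) : CDGAHom A A where
  h0 := AlgHom.id ℂ A.H0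
  hn := fun _ => AddMonoidHom.id _
  semilinear := fun _ _ _ => rfl

/-- Composition of morphisms. -/
def comp {A B C : CDGACoh} (g : CDGAHom B C) (f : CDGAHom A B) : CDGAHom A C where
  h0 := g.h0.comp f.h0
  hn := fun n => (g.hn n).comp (f.hn n)
  semilinear := by
    intro n r x
    simp only [AddMonoidHom.comp_apply, AlgHom.comp_apply]
    rw [f.semilinear, g.semilinear]

/-- The natural base-change map `H^n(A) ⊗_{H^0(A)} H^0(B) → H^n(B)`,
`x ⊗ b ↦ b • f(x)`. Here `H^0(B)` and `H^n(B)` are `H^0(A)`-modules via `f`. -/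
noncomputable def bc {A B : CDGACoh} (f : CDGAHom A B) (n : ℤ) :
    letI : Module A.H0 B.H0 := Module.compHom B.H0 f.h0.toRingHom
    TensorProduct A.H0 (A.H n) B.H0 → B.H n :=
  letI : Module A.H0 B.H0 := Module.compHom B.H0 f.h0.toRingHom
  letI : Module A.H0 (B.H n) := Module.compHom (B.H n) f.h0.toRingHom
  TensorProduct.lift
    { toFun := fun x =>
        { toFun := fun s => s • f.hn n x
          map_add' := fun s t => add_smul s t _
          map_smul' := fun r s => by
            show (f.h0 r * s) • f.hn n x = f.h0 r • s • f.hn n x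
            rw [mul_smul] }
      map_add' := fun x y => by
        ext s
        show s • f.hn n (x + y) = s • f.hn n x + s • f.hn n y
        rw [map_add, smul_add]
      map_smul' := fun r x => by
        ext s
        show s • f.hn n (r • x) = f.h0 r • s • f.hn n x
        rw [f.semilinear, smul_comm] }

/-- A morphism of cdga's is formally étale if `H^0(A) → H^0(B)` is formally étale
as a map of commutative rings, and for every `n < 0` the natural base-change map
`H^n(A) ⊗_{H^0(A)} H^0(B) → H^n(B)` is an isomorphism. -/
def IsFormallyEtale {A B : CDGACoh} (f : CDGAHom A B) : Prop :=
  (letI : Algebra A.H0 B.H0 := f.h0.toRingHom.toAlgebra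
   Algebra.FormallyEtale A.H0 B.H0) ∧
  ∀ n : ℤ, n < 0 → Function.Bijective (f.bc n)

end CDGAHom


section Aux

universe u

theorem FormallySmooth.cancel_aux (R A B : Type u) [CommRing R] [CommRing A] [CommRing B]
    [Algebra R A] [Algebra R B] [Algebra A B] [IsScalarTower R A B]
    [Algebra.FormallyUnramified R A] [Algebra.FormallySmooth R B] :
    Algebra.FormallySmooth A B := by
  refine Algebra.FormallySmooth.of_comp_surjective ?_
  intro C _ _ I hI phi
  letI : Algebra R C := ((algebraMap A C).comp (algebraMap R A)).toAlgebra
  haveI : IsScalarTower R A C := IsScalarTower.of_algebraMap_eq' rfl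
  haveI : IsScalarTower R A (C ⧸ I) := IsScalarTower.of_algebraMap_eq' rfl
  obtain ⟨psi, hpsi⟩ := Algebra.FormallySmooth.exists_lift (R := R) (A := B) I ⟨2, hI⟩
    (phi.restrictScalars R)
  have key : psi.comp (IsScalarTower.toAlgHom R A B) = IsScalarTower.toAlgHom R A C := by
    apply Algebra.FormallyUnramified.comp_injective (R := R) (A := A) (B := C) I hI
    ext a
    have h1 : Ideal.Quotient.mk I (psi (algebraMap A B a)) = phi (algebraMap A B a) :=
      AlgHom.congr_fun hpsi (algebraMap A B a)
    have h2 : phi (algebraMap A B a) = algebraMap A (C ⧸ I) a := phi.commutes a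
    have h3 : algebraMap A (C ⧸ I) a = Ideal.Quotient.mk I (algebraMap A C a) := by
      rw [IsScalarTower.algebraMap_apply A C (C ⧸ I), Ideal.Quotient.algebraMap_eq]
    show Ideal.Quotient.mk I (psi (algebraMap A B a)) = Ideal.Quotient.mk I (algebraMap A C a)
    rw [h1, h2, h3]
  refine ⟨{ psi.toRingHom with commutes' := fun a => AlgHom.congr_fun key a }, ?_⟩
  ext b
  exact AlgHom.congr_fun hpsi b

theorem CDGAHom.bc_zero {A B : CDGACoh} (f : CDGAHom A B) (n : ℤ) :
    f.bc n 0 = 0 := by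
  unfold CDGAHom.bc
  exact map_zero _

theorem CDGAHom.bc_add {A B : CDGACoh} (f : CDGAHom A B) (n : ℤ) :
    letI : Module A.H0 B.H0 := Module.compHom B.H0 f.h0.toRingHom
    ∀ x y : TensorProduct A.H0 (A.H n) B.H0, f.bc n (x + y) = f.bc n x + f.bc n y := by
  intro x y
  unfold CDGAHom.bc
  exact map_add _ x y

theorem CDGAHom.bc_tmul {A B : CDGACoh} (f : CDGAHom A B) (n : ℤ) (x : A.H n) (s : B.H0) :
    letI : Module A.H0 B.H0 := Module.compHom B.H0 f.h0.toRingHom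
    f.bc n (x ⊗ₜ[A.H0] s) = s • f.hn n x := rfl

end Aux

/-- Formally étale morphisms of cdga's satisfy two-out-of-three on the
right: if `f : A → B` and `g ∘ f : A → C` are formally étale, then `g : B → C` is
formally étale. -/
theorem isFormallyEtale_of_comp {A B C : CDGACoh} (f : CDGAHom A B) (g : CDGAHom B C)
    (hf : f.IsFormallyEtale) (hgf : (g.comp f).IsFormallyEtale) :
    g.IsFormallyEtale := by
  have hfa : letI : Algebra A.H0 B.H0 := f.h0.toRingHom.toAlgebra
      Algebra.FormallyEtale A.H0 B.H0 := hf.1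
  have hgfa : letI : Algebra A.H0 C.H0 := (g.comp f).h0.toRingHom.toAlgebra
      Algebra.FormallyEtale A.H0 C.H0 := hgf.1
  letI aAB : Algebra A.H0 B.H0 := f.h0.toRingHom.toAlgebra
  letI aBC : Algebra B.H0 C.H0 := g.h0.toRingHom.toAlgebra
  letI aAC : Algebra A.H0 C.H0 := (g.comp f).h0.toRingHom.toAlgebra
  haveI tower : IsScalarTower A.H0 B.H0 C.H0 := IsScalarTower.of_algebraMap_eq' rfl
  haveI hfa' : Algebra.FormallyEtale A.H0 B.H0 := hfa
  haveI hgfa' : Algebra.FormallyEtale A.H0 C.H0 := hgfa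
  constructor
  · haveI h1 : Algebra.FormallyUnramified B.H0 C.H0 :=
      Algebra.FormallyUnramified.of_restrictScalars A.H0 B.H0 C.H0
    haveI h2 : Algebra.FormallySmooth B.H0 C.H0 :=
      FormallySmooth.cancel_aux A.H0 B.H0 C.H0
    exact Algebra.FormallyEtale.iff_formallyUnramified_and_formallySmooth.mpr ⟨h1, h2⟩
  · intro n hn
    letI mAB : Module A.H0 B.H0 := Module.compHom B.H0 f.h0.toRingHom
    letI mBC : Module B.H0 C.H0 := Module.compHom C.H0 g.h0.toRingHom
    letI mAC : Module A.H0 C.H0 := Module.compHom C.H0 (g.comp f).h0.toRingHom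
    letI mT : Module A.H0 (TensorProduct B.H0 (B.H n) C.H0) :=
      Module.compHom (TensorProduct B.H0 (B.H n) C.H0) f.h0.toRingHom
    haveI : SMulCommClass A.H0 A.H0 (TensorProduct B.H0 (B.H n) C.H0) :=
      ⟨fun a b x => smul_comm (f.h0 a) (f.h0 b) x⟩
    -- the map `H^n(A) ⊗_{H^0(A)} H^0(C) → H^n(B) ⊗_{H^0(B)} H^0(C)`, `m ⊗ c ↦ f(m) ⊗ c`
    let χ : TensorProduct A.H0 (A.H n) C.H0 →ₗ[A.H0] TensorProduct B.H0 (B.H n) C.H0 :=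
      TensorProduct.lift
        { toFun := fun m =>
            { toFun := fun c => f.hn n m ⊗ₜ[B.H0] c
              map_add' := fun c d => TensorProduct.tmul_add _ c d
              map_smul' := fun a c => by
                show f.hn n m ⊗ₜ[B.H0] ((f.h0 a) • c) = a • (f.hn n m ⊗ₜ[B.H0] c)
                show f.hn n m ⊗ₜ[B.H0] ((f.h0 a) • c) = (f.h0 a) • (f.hn n m ⊗ₜ[B.H0] c)
                rw [TensorProduct.smul_tmul', TensorProduct.smul_tmul] }
          map_add' := fun m m' => by
            ext c
            show f.hn n (m + m') ⊗ₜ[B.H0] c = f.hn n m ⊗ₜ[B.H0] c + f.hn n m' ⊗ₜ[B.H0] c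
            rw [map_add, TensorProduct.add_tmul]
          map_smul' := fun a m => by
            ext c
            show f.hn n (a • m) ⊗ₜ[B.H0] c = (f.h0 a) • (f.hn n m ⊗ₜ[B.H0] c)
            rw [f.semilinear, TensorProduct.smul_tmul'] }
    have key : ∀ t, g.bc n (χ t) = (g.comp f).bc n t := by
      intro t
      induction t using TensorProduct.induction_on with
      | zero => rw [map_zero, CDGAHom.bc_zero, CDGAHom.bc_zero]
      | tmul m c =>
          show g.bc n (f.hn n m ⊗ₜ[B.H0] c) = (g.comp f).bc n (m ⊗ₜ[A.H0] c)
          rw [CDGAHom.bc_tmul, CDGAHom.bc_tmul]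
          rfl
      | add t t' ht ht' =>
          rw [map_add, CDGAHom.bc_add, CDGAHom.bc_add, ht, ht']
    have hχ : Function.Surjective χ := by
      intro x
      induction x using TensorProduct.induction_on with
      | zero => exact ⟨0, map_zero χ⟩
      | tmul y c =>
          obtain ⟨t, ht⟩ := (hf.2 n hn).2 y
          rw [← ht]; clear ht
          induction t using TensorProduct.induction_on with
          | zero =>
              refine ⟨0, ?_⟩
              rw [map_zero, CDGAHom.bc_zero, TensorProduct.zero_tmul]
          | tmul m b =>
              refine ⟨m ⊗ₜ[A.H0] (g.h0 b * c), ?_⟩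
              show f.hn n m ⊗ₜ[B.H0] (b • c) = f.bc n (m ⊗ₜ[A.H0] b) ⊗ₜ[B.H0] c
              rw [CDGAHom.bc_tmul, ← TensorProduct.smul_tmul]
          | add t t' ht ht' =>
              obtain ⟨u, hu⟩ := ht
              obtain ⟨v, hv⟩ := ht'
              refine ⟨u + v, ?_⟩
              rw [map_add, hu, hv, CDGAHom.bc_add, TensorProduct.add_tmul]
      | add x y hx hy =>
          obtain ⟨u, hu⟩ := hx
          obtain ⟨v, hv⟩ := hy
          exact ⟨u + v, by rw [map_add, hu, hv]⟩
    constructor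
    · intro x y hxy
      obtain ⟨u, rfl⟩ := hχ x
      obtain ⟨v, rfl⟩ := hχ y
      rw [key, key] at hxy
      rw [(hgf.2 n hn).1 hxy]
    · intro p
      obtain ⟨t, ht⟩ := (hgf.2 n hn).2 p
      exact ⟨χ t, by rw [key, ht]⟩
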